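/- Let S ⊆ ℤⁿ be an additive subsemigroup containing 0 that generates ℤⁿ as a group, such that the closure C of the convex hull of S is a strongly convex cone. Let I• be a primary graded sequence of subsets in S and let Γ(I•) be the closure of the convex hull of ⋃_{k>0} {x/k : x ∈ I_k}. Then Γ = Γ(I•) is a C-convex region (i.e., Γ ⊆ C and for every x ∈ Γ one has x + C ⊆ Γ), and Γ is cobounded (i.e., C \ Γ is bounded). -/

import Mathlib

open MeasureTheory Pointwise Filter

/-- The canonical embedding of `ℤⁿ` into `ℝⁿ`. -/
noncomputable def zToR {n : ℕ} (x : Fin n → ℤ) : Fin n → ℝ := fun i => (x i : ℝ)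

/-- The convex region `Γ(I•)` associated to a graded sequence of subsets `I•` of `ℤⁿ`:
the closure of the convex hull of `⋃_{k>0} {x/k : x ∈ I_k}`. -/
noncomputable def GammaSeq {n : ℕ} (I : ℕ → Set (Fin n → ℤ)) : Set (Fin n → ℝ) :=
  closure (convexHull ℝ (⋃ k : ℕ, ⋃ _ : 0 < k, (fun x => ((k : ℝ))⁻¹ • zToR x) '' I k))

lemma zToR_add {n : ℕ} (a b : Fin n → ℤ) : zToR (a + b) = zToR a + zToR b := by
  funext i; simp [zToR]

lemma zToR_zero {n : ℕ} : zToR (0 : Fin n → ℤ) = 0 := by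
  funext i; simp [zToR]

lemma zToR_nsmul {n : ℕ} (m : ℕ) (a : Fin n → ℤ) :
    zToR (m • a) = (m : ℝ) • zToR a := by
  funext i; simp [zToR, mul_comm]

lemma zToR_sum {n : ℕ} {ι : Type*} [Fintype ι] (f : ι → (Fin n → ℤ)) :
    zToR (∑ i, f i) = ∑ i, zToR (f i) := by
  funext j
  simp only [zToR, Finset.sum_apply]
  push_cast
  rfl

lemma zToR_inj {n : ℕ} : Function.Injective (zToR (n := n)) := by
  intro a b h
  funext i
  have := congrFun h i
  simpa [zToR] using this

/-- For a primary graded sequence `I•` of subsets in a semigroup `S ⊆ ℤⁿ` whose associated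
cone `C` is strongly convex, `Γ(I•)` is a cobounded `C`-convex region. -/
theorem gammaSeq_is_cobounded_convex_region
    (n : ℕ) (S : Set (Fin n → ℤ)) (hS0 : (0 : Fin n → ℤ) ∈ S)
    (hSadd : ∀ a ∈ S, ∀ b ∈ S, a + b ∈ S)
    (hSgen : AddSubgroup.closure S = (⊤ : AddSubgroup (Fin n → ℤ)))
    (C : Set (Fin n → ℝ)) (hC : C = closure (convexHull ℝ (zToR '' S)))
    (hCcone : ∀ x ∈ C, ∀ t : ℝ, 0 ≤ t → t • x ∈ C)
    (hCsalient : ∀ x ∈ C, -x ∈ C → x = 0)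
    (ℓ : (Fin n → ℝ) →ₗ[ℝ] ℝ)
    (hℓnonneg : ∀ x ∈ C, 0 ≤ ℓ x) (hℓker : ∀ x ∈ C, ℓ x = 0 → x = 0)
    (I : ℕ → Set (Fin n → ℤ))
    (hIsub : ∀ k : ℕ, 0 < k → I k ⊆ S)
    (hIne : ∀ k : ℕ, 0 < k → (I k).Nonempty)
    (hIgr : ∀ k m : ℕ, 0 < k → 0 < m → I k + I m ⊆ I (k + m))
    (t₀ : ℝ) (ht₀ : 0 < t₀)
    (hprim : ∀ k : ℕ, 0 < k →
      {x ∈ I k | (k : ℝ) * t₀ ≤ ℓ (zToR x)} = {x ∈ S | (k : ℝ) * t₀ ≤ ℓ (zToR x)})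
    (Γ : Set (Fin n → ℝ)) (hΓ : Γ = GammaSeq I) :
    Γ ⊆ C ∧ (∀ x ∈ Γ, ∀ y ∈ C, x + y ∈ Γ) ∧ Bornology.IsBounded (C \ Γ) := by
  -- the submonoid generated by S is S itself
  set M : AddSubmonoid (Fin n → ℤ) :=
    { carrier := S
      add_mem' := fun {a b} ha hb => hSadd a ha b hb
      zero_mem' := hS0 } with hM
  have hMS : ∀ x : Fin n → ℤ, x ∈ M ↔ x ∈ S := fun x => Iff.rfl
  -- basic facts
  have hCclosed : IsClosed C := hC ▸ isClosed_closure
  have hCconv : Convex ℝ C := hC ▸ (convex_convexHull ℝ _).closure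
  have hSC : ∀ z ∈ S, zToR z ∈ C := fun z hz =>
    hC ▸ subset_closure (subset_convexHull ℝ _ ⟨z, hz, rfl⟩)
  have hℓS : ∀ z ∈ S, 0 ≤ ℓ (zToR z) := fun z hz => hℓnonneg _ (hSC z hz)
  have hℓcont : Continuous ℓ := ℓ.continuous_of_finiteDimensional
  set U : Set (Fin n → ℝ) :=
    ⋃ k : ℕ, ⋃ _ : 0 < k, (fun x => ((k : ℝ))⁻¹ • zToR x) '' I k with hU
  have hΓdef : Γ = closure (convexHull ℝ U) := hΓ
  have hΓclosed : IsClosed Γ := hΓdef ▸ isClosed_closure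
  have hΓconv : Convex ℝ Γ := hΓdef ▸ (convex_convexHull ℝ _).closure
  have hUΓ : U ⊆ Γ := by
    rw [hΓdef]; exact (subset_convexHull ℝ _).trans subset_closure
  have hUmem : ∀ k : ℕ, 0 < k → ∀ z ∈ I k, ((k : ℝ))⁻¹ • zToR z ∈ U := by
    intro k hk z hz
    exact Set.mem_iUnion.2 ⟨k, Set.mem_iUnion.2 ⟨hk, ⟨z, hz, rfl⟩⟩⟩
  -- Part 1 : Γ ⊆ C
  have hUC : U ⊆ C := by
    intro x hx
    simp only [hU, Set.mem_iUnion, Set.mem_image] at hx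
    obtain ⟨k, hk, z, hz, rfl⟩ := hx
    exact hCcone _ (hSC z (hIsub k hk hz)) _ (by positivity)
  have part1 : Γ ⊆ C := by
    rw [hΓdef]
    exact closure_minimal (convexHull_min hUC hCconv) hCclosed
  -- primarity, one direction
  have hprim' : ∀ k : ℕ, 0 < k → ∀ z ∈ S, (k : ℝ) * t₀ ≤ ℓ (zToR z) → z ∈ I k := by
    intro k hk z hz hl
    have h : z ∈ {x ∈ I k | (k : ℝ) * t₀ ≤ ℓ (zToR x)} := by
      rw [hprim k hk]; exact ⟨hz, hl⟩
    exact h.1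
  -- key translation lemma on generators
  have key : ∀ k : ℕ, 0 < k → ∀ z ∈ I k, ∀ s ∈ S,
      ((k : ℝ))⁻¹ • zToR z + zToR s ∈ Γ := by
    intro k hk z hz s hs
    rcases eq_or_ne s 0 with rfl | hs0
    · rw [zToR_zero, add_zero]
      exact hUΓ (hUmem k hk z hz)
    have hv0 : 0 < ℓ (zToR s) := by
      rcases lt_or_eq_of_le (hℓS s hs) with h | h
      · exact h
      · exfalso
        apply hs0
        apply zToR_inj
        rw [zToR_zero]
        exact hℓker _ (hSC s hs) h.symm
    obtain ⟨J₀, hJ₀⟩ := exists_nat_ge (t₀ / ℓ (zToR s))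
    set J : ℕ := max J₀ 1 with hJdef
    have hJ1 : 1 ≤ J := le_max_right _ _
    have hJR : (1 : ℝ) ≤ (J : ℝ) := by exact_mod_cast hJ1
    have hJt : t₀ ≤ (J : ℝ) * ℓ (zToR s) := by
      have h1 : t₀ / ℓ (zToR s) ≤ (J : ℝ) :=
        hJ₀.trans (by exact_mod_cast le_max_left J₀ 1)
      calc t₀ = t₀ / ℓ (zToR s) * ℓ (zToR s) := by field_simp
        _ ≤ (J : ℝ) * ℓ (zToR s) := by
            exact mul_le_mul_of_nonneg_right h1 hv0.le
    set w : Fin n → ℤ := z + (k * J) • s with hw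
    have hwS : w ∈ S := hSadd _ (hIsub k hk hz) _ ((hMS _).1 (M.nsmul_mem ((hMS _).2 hs) (k * J)))
    have hwz : zToR w = zToR z + ((k * J : ℕ) : ℝ) • zToR s := by
      rw [hw, zToR_add, zToR_nsmul]
    have hwl : (k : ℝ) * t₀ ≤ ℓ (zToR w) := by
      rw [hwz, map_add, ℓ.map_smul, smul_eq_mul]
      have h1 : ((k * J : ℕ) : ℝ) = (k : ℝ) * (J : ℝ) := by push_cast; ring
      rw [h1]
      have h2 : (k : ℝ) * t₀ ≤ (k : ℝ) * ((J : ℝ) * ℓ (zToR s)) := by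
        apply mul_le_mul_of_nonneg_left hJt (by positivity)
      nlinarith [hℓS z (hIsub k hk hz)]
    have hwI : w ∈ I k := hprim' k hk w hwS hwl
    have hq : ((k : ℝ))⁻¹ • zToR w ∈ Γ := hUΓ (hUmem k hk w hwI)
    have hx : ((k : ℝ))⁻¹ • zToR z ∈ Γ := hUΓ (hUmem k hk z hz)
    have hkne : (k : ℝ) ≠ 0 := by positivity
    have hqe : ((k : ℝ))⁻¹ • zToR w
        = ((k : ℝ))⁻¹ • zToR z + (J : ℝ) • zToR s := by
      rw [hwz, smul_add, smul_smul]
      congr 2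
      push_cast
      field_simp
    have hJne : (J : ℝ) ≠ 0 := by positivity
    have combo := hΓconv hx hq (a := 1 - (J : ℝ)⁻¹) (b := (J : ℝ)⁻¹)
      (by rw [sub_nonneg]; exact inv_le_one_of_one_le₀ hJR)
      (by positivity) (by ring)
    have hfin : ((k : ℝ))⁻¹ • zToR z + zToR s
        = (1 - (J : ℝ)⁻¹) • (((k : ℝ))⁻¹ • zToR z)
          + (J : ℝ)⁻¹ • (((k : ℝ))⁻¹ • zToR w) := by
      rw [hqe, smul_add, smul_smul ((J : ℝ)⁻¹) ((J : ℝ)), inv_mul_cancel₀ hJne, one_smul]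
      module
    rw [hfin]
    exact combo
  -- translation by elements of S, for arbitrary points of Γ
  have step : ∀ s ∈ S, ∀ x ∈ Γ, x + zToR s ∈ Γ := by
    intro s hs
    set A : Set (Fin n → ℝ) := {x | x + zToR s ∈ Γ} with hA
    have hAclosed : IsClosed A := hΓclosed.preimage (continuous_id.add continuous_const)
    have hAconv : Convex ℝ A := by
      intro a ha b hb p q hp hq hpq
      have h := hΓconv ha hb hp hq hpq
      have he : p • (a + zToR s) + q • (b + zToR s) = p • a + q • b + zToR s := by
        rw [show q = 1 - p by linarith]
        module
      show p • a + q • b + zToR s ∈ Γ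
      rw [← he]; exact h
    have hAU : U ⊆ A := by
      intro u hu
      simp only [hU, Set.mem_iUnion, Set.mem_image] at hu
      obtain ⟨k, hk, z, hz, rfl⟩ := hu
      exact key k hk z hz s hs
    have hΓA : Γ ⊆ A := by
      rw [hΓdef]
      exact closure_minimal (convexHull_min hAU hAconv) hAclosed
    exact fun x hx => hΓA hx
  -- Part 2 : Γ + C ⊆ Γ
  have part2 : ∀ x ∈ Γ, ∀ y ∈ C, x + y ∈ Γ := by
    intro x hx y hy
    set B : Set (Fin n → ℝ) := {y | x + y ∈ Γ} with hB
    have hBclosed : IsClosed B := hΓclosed.preimage (continuous_const.add continuous_id)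
    have hBconv : Convex ℝ B := by
      intro a ha b hb p q hp hq hpq
      have h := hΓconv ha hb hp hq hpq
      have he : p • (x + a) + q • (x + b) = x + (p • a + q • b) := by
        rw [show q = 1 - p by linarith]
        module
      show x + (p • a + q • b) ∈ Γ
      rw [← he]; exact h
    have hBS : zToR '' S ⊆ B := by
      rintro _ ⟨s, hs, rfl⟩
      exact step s hs x hx
    have hCB : C ⊆ B := by
      rw [hC]
      exact closure_minimal (convexHull_min hBS hBconv) hBclosed
    exact hCB hy
  refine ⟨part1, part2, ?_⟩
  -- Claim A : points of the convex hull with ℓ > t₀ lie in Γ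
  have claimA : ∀ p ∈ convexHull ℝ (zToR '' S), t₀ < ℓ p → p ∈ Γ := by
    intro p hp hlp
    rw [mem_convexHull_iff_exists_fintype] at hp
    obtain ⟨ι, _, wgt, zpt, hw0, hw1, hzS, hsum⟩ := hp
    choose σ hσS hσeq using fun i => hzS i
    -- approximating sequence
    set a : ℕ → ι → ℕ := fun N i => ⌊(N : ℝ) * wgt i⌋₊ with ha
    set q : ℕ → Fin n → ℝ := fun N => ((N : ℝ))⁻¹ • zToR (∑ i, a N i • σ i) with hqdef
    have hqe : ∀ N : ℕ, q N = ∑ i, (((a N i : ℝ)) / (N : ℝ)) • zToR (σ i) := by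
      intro N
      rw [hqdef]
      simp only
      rw [zToR_sum, Finset.smul_sum]
      congr 1
      funext i
      rw [zToR_nsmul, smul_smul]
      congr 1
      field_simp
    have hsum' : ∑ i, wgt i • zToR (σ i) = p := by
      rw [← hsum]
      exact Finset.sum_congr rfl fun i _ => by rw [hσeq i]
    have hqtend : Filter.Tendsto q Filter.atTop (nhds p) := by
      rw [← hsum']
      have : ∀ i : ι, Filter.Tendsto (fun N : ℕ => (((a N i : ℝ)) / (N : ℝ)) • zToR (σ i))
          Filter.atTop (nhds (wgt i • zToR (σ i))) := by
        intro i
        have hcoef : Filter.Tendsto (fun N : ℕ => ((a N i : ℝ)) / (N : ℝ))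
            Filter.atTop (nhds (wgt i)) := by
          have hle : ∀ N : ℕ, 1 ≤ N → ((a N i : ℝ)) / (N : ℝ) ≤ wgt i := by
            intro N hN
            have hNpos : (0 : ℝ) < N := by exact_mod_cast hN
            rw [div_le_iff₀ hNpos, ha]
            have := Nat.floor_le (a := (N : ℝ) * wgt i) (mul_nonneg (by positivity) (hw0 i))
            linarith
          have hge : ∀ N : ℕ, 1 ≤ N → wgt i - 1 / (N : ℝ) ≤ ((a N i : ℝ)) / (N : ℝ) := by
            intro N hN
            have hNpos : (0 : ℝ) < N := by exact_mod_cast hN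
            rw [sub_le_iff_le_add, ← add_div, le_div_iff₀ hNpos]
            have := Nat.lt_floor_add_one ((N : ℝ) * wgt i)
            have : (N : ℝ) * wgt i ≤ (a N i : ℝ) + 1 := by
              rw [ha]; push_cast; linarith
            nlinarith
          have hlow : Filter.Tendsto (fun N : ℕ => wgt i - 1 / (N : ℝ))
              Filter.atTop (nhds (wgt i)) := by
            have := tendsto_one_div_atTop_nhds_zero_nat (𝕜 := ℝ)
            simpa using (tendsto_const_nhds (x := wgt i)).sub this
          refine tendsto_of_tendsto_of_tendsto_of_le_of_le' hlow tendsto_const_nhds ?_ ?_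
          · filter_upwards [Filter.eventually_ge_atTop 1] with N hN using hge N hN
          · filter_upwards [Filter.eventually_ge_atTop 1] with N hN using hle N hN
        exact hcoef.smul_const _
      have := tendsto_finset_sum Finset.univ (fun i _ => this i)
      refine Filter.Tendsto.congr (fun N => (hqe N).symm) this
    have hltend : Filter.Tendsto (fun N => ℓ (q N)) Filter.atTop (nhds (ℓ p)) :=
      (hℓcont.tendsto p).comp hqtend
    have hev : ∀ᶠ N : ℕ in Filter.atTop, t₀ ≤ ℓ (q N) := by
      have : ∀ᶠ x in nhds (ℓ p), t₀ ≤ x :=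
        (eventually_gt_nhds hlp).mono fun x hx => hx.le
      exact hltend.eventually this
    have hevΓ : ∀ᶠ N : ℕ in Filter.atTop, q N ∈ Γ := by
      filter_upwards [hev, Filter.eventually_ge_atTop 1] with N hN hN1
      have hNpos : 0 < N := hN1
      have hwN : (∑ i, a N i • σ i) ∈ S := by
        refine (hMS _).1 (M.sum_mem fun i _ => M.nsmul_mem ((hMS _).2 (hσS i)) _)
      have hl : (N : ℝ) * t₀ ≤ ℓ (zToR (∑ i, a N i • σ i)) := by
        have hNpos' : (0 : ℝ) < N := by exact_mod_cast hN1
        have h1 : ℓ (q N) = ((N : ℝ))⁻¹ * ℓ (zToR (∑ i, a N i • σ i)) := by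
          rw [hqdef]; simp [ℓ.map_smul]
        have h2 : t₀ ≤ ((N : ℝ))⁻¹ * ℓ (zToR (∑ i, a N i • σ i)) := h1 ▸ hN
        calc (N : ℝ) * t₀ ≤ (N : ℝ) * (((N : ℝ))⁻¹ * ℓ (zToR (∑ i, a N i • σ i))) :=
              mul_le_mul_of_nonneg_left h2 hNpos'.le
          _ = ℓ (zToR (∑ i, a N i • σ i)) := by field_simp
      have : (∑ i, a N i • σ i) ∈ I N := hprim' N hNpos _ hwN hl
      exact hUΓ (hUmem N hNpos _ this)
    exact hΓclosed.mem_of_tendsto hqtend hevΓ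
  -- Claim B : points of C with ℓ > t₀ lie in Γ
  have claimB : ∀ c ∈ C, t₀ < ℓ c → c ∈ Γ := by
    intro c hc hlc
    have hO : IsOpen {x : Fin n → ℝ | t₀ < ℓ x} := isOpen_lt continuous_const hℓcont
    have h1 : c ∈ {x : Fin n → ℝ | t₀ < ℓ x} ∩ closure (convexHull ℝ (zToR '' S)) :=
      ⟨hlc, hC ▸ hc⟩
    have h2 := hO.inter_closure h1
    have h3 : {x : Fin n → ℝ | t₀ < ℓ x} ∩ convexHull ℝ (zToR '' S) ⊆ Γ := by
      rintro x ⟨hx1, hx2⟩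
      exact claimA x hx2 hx1
    have := closure_mono h3 h2
    rwa [hΓclosed.closure_eq] at this
  -- Part 3 : coboundedness
  set K : Set (Fin n → ℝ) := C ∩ Metric.sphere 0 1 with hK
  rcases Set.eq_empty_or_nonempty K with hKe | hKne
  · -- C = {0}
    have hC0 : C ⊆ {0} := by
      intro x hx
      by_contra hx0
      have hxn : ‖x‖ ≠ 0 := by
        simpa [norm_eq_zero] using hx0
      have hmem : ‖x‖⁻¹ • x ∈ K := by
        refine ⟨hCcone _ hx _ (by positivity), ?_⟩
        simp [norm_smul, abs_of_nonneg (inv_nonneg.2 (norm_nonneg x)),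
          inv_mul_cancel₀ hxn]
      rw [hKe] at hmem
      exact hmem
    exact Bornology.IsBounded.subset (Bornology.isBounded_singleton (x := (0 : Fin n → ℝ)))
      (fun x hx => hC0 hx.1)
  · have hKcompact : IsCompact K := (isCompact_sphere 0 1).inter_left hCclosed
    obtain ⟨x₀, hx₀K, hmin⟩ := hKcompact.exists_isMinOn hKne hℓcont.continuousOn
    rw [isMinOn_iff] at hmin
    have hx₀n : ‖x₀‖ = 1 := by
      have := hx₀K.2
      rwa [Metric.mem_sphere, dist_zero_right] at this
    have hδ : 0 < ℓ x₀ := by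
      rcases lt_or_eq_of_le (hℓnonneg _ hx₀K.1) with h | h
      · exact h
      · exfalso
        have := hℓker _ hx₀K.1 h.symm
        rw [this] at hx₀n
        simp at hx₀n
    set δ := ℓ x₀ with hδdef
    have hbound : ∀ x ∈ C \ Γ, ‖x‖ ≤ t₀ / δ := by
      rintro x ⟨hxC, hxΓ⟩
      have hlx : ℓ x ≤ t₀ := by
        by_contra h
        exact hxΓ (claimB x hxC (lt_of_not_ge h))
      rcases eq_or_ne x 0 with rfl | hx0
      · simp [le_div_iff₀ hδ]
        positivity
      · have hxn : (0 : ℝ) < ‖x‖ := norm_pos_iff.2 hx0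
        have hu : ‖x‖⁻¹ • x ∈ K := by
          refine ⟨hCcone _ hxC _ (by positivity), ?_⟩
          simp [norm_smul, abs_of_nonneg (inv_nonneg.2 (norm_nonneg x)),
            inv_mul_cancel₀ hxn.ne']
        have h1 : δ ≤ ℓ (‖x‖⁻¹ • x) := hmin _ hu
        rw [ℓ.map_smul, smul_eq_mul] at h1
        have h2 : δ * ‖x‖ ≤ ℓ x := by
          rw [mul_comm]
          calc ‖x‖ * δ ≤ ‖x‖ * (‖x‖⁻¹ * ℓ x) :=
                mul_le_mul_of_nonneg_left h1 hxn.le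
            _ = ℓ x := by field_simp
        rw [le_div_iff₀ hδ, mul_comm]
        linarith
    exact Bornology.IsBounded.subset (Metric.isBounded_closedBall (x := (0 : Fin n → ℝ))
      (r := t₀ / δ)) (fun x hx => Metric.mem_closedBall.2 (by
        rw [dist_zero_right]; exact hbound x hx))
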